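/- Fix K : ℕ and weights v : Fin K → ℕ, and suppose Fin K is partitioned into two disjoint finite subsets A and B with A ∪ B = Fin K. Let δ_A be the minimum over finite subsets S ⊆ A of |(∑_{k ∈ A} v k : ℤ) − 2·(∑_{k ∈ S} v k : ℤ)|, let δ_B be the analogous minimum for B, and let δ(v) be the minimal partition difference of the whole family. Then δ(v) ≤ |δ_A − δ_B|: combining an optimal two-subset split of A with an optimal two-subset split of B (pairing the heavier side of one with the lighter side of the other) yields a split of Fin K whose parts' sums differ by exactly |δ_A − δ_B|. -/

import Mathlib

/-- Optimal substructure lemma from the proof of Proposition 2: if `Fin K` is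
partitioned into `A` and `B`, and `δA`, `δB` are the minimal two-subset partition
differences of `A` and `B` respectively, while `δ` is the minimal partition
difference of the whole family, then `δ ≤ |δA − δB|`. -/
theorem partition_difference_substructure (K : ℕ) (v : Fin K → ℕ)
    (A B : Finset (Fin K)) (hdisj : Disjoint A B) (hunion : A ∪ B = Finset.univ)
    (δA : ℤ)
    (hA_lb : ∀ S ⊆ A, δA ≤ |(∑ k ∈ A, v k : ℤ) - 2 * ((∑ k ∈ S, v k : ℕ) : ℤ)|)
    (hA_att : ∃ S ⊆ A, |(∑ k ∈ A, v k : ℤ) - 2 * ((∑ k ∈ S, v k : ℕ) : ℤ)| = δA)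
    (δB : ℤ)
    (hB_lb : ∀ S ⊆ B, δB ≤ |(∑ k ∈ B, v k : ℤ) - 2 * ((∑ k ∈ S, v k : ℕ) : ℤ)|)
    (hB_att : ∃ S ⊆ B, |(∑ k ∈ B, v k : ℤ) - 2 * ((∑ k ∈ S, v k : ℕ) : ℤ)| = δB)
    (δ : ℤ)
    (hδ_lb : ∀ S : Finset (Fin K),
      δ ≤ |((∑ k, v k : ℕ) : ℤ) - 2 * ((∑ k ∈ S, v k : ℕ) : ℤ)|)
    (hδ_att : ∃ S : Finset (Fin K),
      |((∑ k, v k : ℕ) : ℤ) - 2 * ((∑ k ∈ S, v k : ℕ) : ℤ)| = δ) :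
    δ ≤ |δA - δB| := by
  obtain ⟨SA, hSAsub, hSA⟩ := hA_att
  obtain ⟨SB, hSBsub, hSB⟩ := hB_att
  set dA : ℤ := (∑ k ∈ A, (v k : ℤ)) - 2 * ((∑ k ∈ SA, v k : ℕ) : ℤ) with hdA
  set dB : ℤ := (∑ k ∈ B, (v k : ℤ)) - 2 * ((∑ k ∈ SB, v k : ℕ) : ℤ) with hdB
  have htot : ((∑ k, v k : ℕ) : ℤ) = (∑ k ∈ A, (v k : ℤ)) + (∑ k ∈ B, (v k : ℤ)) := by
    rw [← Finset.sum_union hdisj, hunion]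
    push_cast
    rfl
  have hδA0 : 0 ≤ δA := hSA ▸ abs_nonneg _
  have hδB0 : 0 ≤ δB := hSB ▸ abs_nonneg _
  -- δ ≤ |dA + dB| using SA ∪ SB
  have h1 : δ ≤ |dA + dB| := by
    have hd : Disjoint SA SB := hdisj.mono hSAsub hSBsub
    have := hδ_lb (SA ∪ SB)
    rw [Finset.sum_union hd] at this
    calc δ ≤ _ := this
      _ = |dA + dB| := by rw [htot, hdA, hdB]; push_cast; ring_nf
  -- δ ≤ |dA - dB| using SA ∪ (B \ SB)
  have h2 : δ ≤ |dA - dB| := by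
    have hd : Disjoint SA (B \ SB) :=
      hdisj.mono hSAsub (Finset.sdiff_subset)
    have hsd : ((∑ k ∈ B \ SB, v k : ℕ) : ℤ)
        = (∑ k ∈ B, (v k : ℤ)) - ((∑ k ∈ SB, v k : ℕ) : ℤ) := by
      have h := congrArg (Nat.cast : ℕ → ℤ) (Finset.sum_sdiff (f := v) hSBsub)
      push_cast at h ⊢
      linarith
    have := hδ_lb (SA ∪ (B \ SB))
    rw [Finset.sum_union hd] at this
    calc δ ≤ _ := this
      _ = |dA - dB| := by
          rw [htot, hdA, hdB]
          push_cast [hsd]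
          ring_nf
  rcases (abs_eq hδA0).mp hSA with hA1 | hA1 <;>
  rcases (abs_eq hδB0).mp hSB with hB1 | hB1
  · rw [hA1, hB1] at h2; exact h2
  · rw [hA1, hB1] at h1; simpa [sub_eq_add_neg] using h1
  · rw [hA1, hB1] at h1
    calc δ ≤ |(-δA + δB)| := h1
      _ = |δA - δB| := by rw [← abs_neg]; ring_nf
  · rw [hA1, hB1] at h2
    calc δ ≤ |(-δA - -δB)| := h2
      _ = |δA - δB| := by rw [← abs_neg]; ring_nf
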